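/- For n > 2 and 1 < k < n, the identity ∫₀^∞ (1 + t^n)^{-k/n} dt = (cos(π/n) + sin(π/n)·cot((k-1)π/n)) · ∫₀¹ (1 - x^n)^{-k/n} dx holds. -/

import Mathlib

open MeasureTheory Real Set

lemma realBeta (a b : ℝ) (ha : 0 < a) (hb : 0 < b) :
    ∫ x in Set.Ioo (0:ℝ) 1, x ^ (a-1) * (1-x) ^ (b-1) =
      Real.Gamma a * Real.Gamma b / Real.Gamma (a+b) := by
  have hab : Real.Gamma (a+b) ≠ 0 := (Real.Gamma_pos_of_pos (by linarith)).ne'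
  have hC : Complex.betaIntegral a b =
      ((∫ x in Set.Ioo (0:ℝ) 1, x ^ (a-1) * (1-x) ^ (b-1) : ℝ) : ℂ) := by
    rw [Complex.betaIntegral, intervalIntegral.integral_of_le zero_le_one,
      MeasureTheory.integral_Ioc_eq_integral_Ioo]
    have : ∀ x ∈ Set.Ioo (0:ℝ) 1,
        (x:ℂ) ^ ((a:ℂ)-1) * ((1:ℂ)-x) ^ ((b:ℂ)-1)
          = ((x ^ (a-1) * (1-x) ^ (b-1) : ℝ) : ℂ) := by
      intro x hx
      rw [show ((x:ℝ)^(a-1)*(1-x)^(b-1) : ℝ) = ((x^(a-1):ℝ)) * (((1-x)^(b-1):ℝ)) by ring,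
        Complex.ofReal_mul, Complex.ofReal_cpow hx.1.le, Complex.ofReal_cpow (by linarith [hx.2])]
      push_cast
      ring
    rw [setIntegral_congr_fun measurableSet_Ioo this]
    exact integral_ofReal
  have key := Complex.Gamma_mul_Gamma_eq_betaIntegral (s := (a:ℂ)) (t := (b:ℂ))
    (by simpa using ha) (by simpa using hb)
  rw [hC, show ((a:ℂ)+b) = ((a+b:ℝ):ℂ) by push_cast; ring,
    Complex.Gamma_ofReal, Complex.Gamma_ofReal, Complex.Gamma_ofReal,
    ← Complex.ofReal_mul, ← Complex.ofReal_mul] at key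
  have h3 := Complex.ofReal_injective key
  rw [h3]
  field_simp

lemma subJ (n k : ℝ) (hn : 0 < n) (hk0 : 0 < k) (hkn : k < n) :
    ∫ x in (0:ℝ)..1, (1 - x ^ n) ^ (-(k / n)) =
      (1/n) * (Real.Gamma (1/n) * Real.Gamma (1 - k/n) / Real.Gamma (1/n + (1 - k/n))) := by
  have h1n : (0:ℝ) < 1/n := by positivity
  rw [intervalIntegral.integral_of_le zero_le_one, MeasureTheory.integral_Ioc_eq_integral_Ioo]
  have him : (fun u : ℝ => u ^ (1/n)) '' Ioo 0 1 = Ioo (0:ℝ) 1 := by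
    ext x
    constructor
    · rintro ⟨u, hu, rfl⟩
      exact ⟨Real.rpow_pos_of_pos hu.1 _, Real.rpow_lt_one hu.1.le hu.2 h1n⟩
    · intro hx
      refine ⟨x ^ n, ⟨Real.rpow_pos_of_pos hx.1 _, Real.rpow_lt_one hx.1.le hx.2 hn⟩, ?_⟩
      simp only []
      rw [← Real.rpow_mul hx.1.le, mul_one_div, div_self hn.ne', Real.rpow_one]
  have hderiv : ∀ u ∈ Ioo (0:ℝ) 1, HasDerivWithinAt (fun u : ℝ => u ^ (1/n))
      ((1/n) * u ^ (1/n - 1)) (Ioo 0 1) u := fun u hu =>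
    (Real.hasDerivAt_rpow_const (Or.inl hu.1.ne')).hasDerivWithinAt
  have hinj : Set.InjOn (fun u : ℝ => u ^ (1/n)) (Ioo 0 1) := by
    intro u hu v hv h
    have := congrArg (fun y : ℝ => y ^ n) h
    simpa [← Real.rpow_mul hu.1.le, ← Real.rpow_mul hv.1.le, one_div,
      inv_mul_cancel₀ hn.ne'] using this
  rw [← him, integral_image_eq_integral_abs_deriv_smul measurableSet_Ioo hderiv hinj]
  have : ∀ u ∈ Ioo (0:ℝ) 1, |(1/n) * u ^ (1/n - 1)| • (1 - (u ^ (1/n)) ^ n) ^ (-(k / n))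
      = (1/n) * (u ^ (1/n - 1) * (1 - u) ^ ((1 - k/n) - 1)) := by
    intro u hu
    have hu0 := hu.1
    rw [← Real.rpow_mul hu0.le, one_div_mul_cancel hn.ne', Real.rpow_one,
      abs_of_pos (by positivity), smul_eq_mul]
    rw [show (1 - k/n) - 1 = -(k/n) by ring]
    ring
  rw [setIntegral_congr_fun measurableSet_Ioo this, MeasureTheory.integral_const_mul,
    realBeta (1/n) (1 - k/n) h1n (by rw [sub_pos, div_lt_one hn]; exact hkn)]

lemma subI (n k : ℝ) (hn : 0 < n) (hk1 : 1 < k) (hkn : k < n) :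
    ∫ t in Set.Ioi (0:ℝ), (1 + t ^ n) ^ (-(k / n)) =
      (1/n) * (Real.Gamma (1/n) * Real.Gamma ((k-1)/n) / Real.Gamma (1/n + (k-1)/n)) := by
  have h1n : (0:ℝ) < 1/n := by positivity
  set g : ℝ → ℝ := fun u => (u / (1 - u)) ^ (1/n) with hg
  set g' : ℝ → ℝ := fun u => (1/n) * (u / (1 - u)) ^ (1/n - 1) * ((1 - u)^2)⁻¹ with hg'
  have him : g '' Ioo 0 1 = Ioi (0:ℝ) := by
    ext t
    constructor
    · rintro ⟨u, hu, rfl⟩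
      exact Real.rpow_pos_of_pos (div_pos hu.1 (by linarith [hu.2])) _
    · intro ht
      have ht' : (0:ℝ) < t := ht
      have htn : (0:ℝ) < t ^ n := Real.rpow_pos_of_pos ht' n
      refine ⟨t ^ n / (1 + t ^ n), ⟨by positivity, by rw [div_lt_one (by positivity)]; linarith⟩, ?_⟩
      have h2 : t ^ n / (1 + t ^ n) / (1 - t ^ n / (1 + t ^ n)) = t ^ n := by
        rw [show 1 - t ^ n / (1 + t ^ n) = 1 / (1 + t ^ n) by field_simp; ring]; field_simp
      simp only [hg, h2]
      rw [← Real.rpow_mul ht'.le, mul_one_div, div_self hn.ne', Real.rpow_one]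
  have hderiv : ∀ u ∈ Ioo (0:ℝ) 1, HasDerivWithinAt g (g' u) (Ioo 0 1) u := by
    intro u hu
    have hv : (0:ℝ) < 1 - u := by linarith [hu.2]
    have hφ : HasDerivAt (fun u : ℝ => u / (1 - u)) (((1:ℝ) * (1 - u) - u * (0 - 1)) / (1 - u)^2) u :=
      (hasDerivAt_id u).div ((hasDerivAt_const u 1).sub (hasDerivAt_id u)) hv.ne'
    have hD := hφ.rpow_const (p := 1/n) (Or.inl (div_pos hu.1 hv).ne')
    have hEq : (((1:ℝ) * (1 - u) - u * (0 - 1)) / (1 - u)^2) * (1/n) * (u / (1 - u)) ^ (1/n - 1)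
        = g' u := by
      simp only [hg']
      rw [show (1:ℝ)*(1-u) - u*(0 - 1) = 1 by ring]
      ring
    exact (hEq ▸ hD).hasDerivWithinAt
  have hinj : Set.InjOn g (Ioo 0 1) := by
    intro u hu v hv h
    have hu' : (0:ℝ) < u / (1 - u) := div_pos hu.1 (by linarith [hu.2])
    have hv' : (0:ℝ) < v / (1 - v) := div_pos hv.1 (by linarith [hv.2])
    have h2 := congrArg (fun y : ℝ => y ^ n) h
    simp only [hg, ← Real.rpow_mul hu'.le, ← Real.rpow_mul hv'.le, one_div,
      inv_mul_cancel₀ hn.ne', Real.rpow_one] at h2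
    rw [div_eq_div_iff (by linarith [hu.2]) (by linarith [hv.2])] at h2
    nlinarith [h2]
  rw [← him, integral_image_eq_integral_abs_deriv_smul measurableSet_Ioo hderiv hinj]
  have key : ∀ u ∈ Ioo (0:ℝ) 1, |g' u| • (1 + (g u) ^ n) ^ (-(k / n))
      = (1/n) * (u ^ (1/n - 1) * (1 - u) ^ ((k-1)/n - 1)) := by
    intro u hu
    have hu0 := hu.1
    have hv : (0:ℝ) < 1 - u := by linarith [hu.2]
    have hA : (0:ℝ) < u / (1 - u) := div_pos hu0 hv
    have hgn : (g u) ^ n = u / (1 - u) := by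
      simp only [hg]
      rw [← Real.rpow_mul hA.le, one_div_mul_cancel hn.ne', Real.rpow_one]
    have h1A : 1 + u / (1 - u) = (1 - u)⁻¹ := by field_simp; ring
    have hpos : (0:ℝ) < g' u := by
      simp only [hg']
      exact mul_pos (mul_pos h1n (Real.rpow_pos_of_pos hA _)) (inv_pos.mpr (by positivity))
    have hsq : (((1:ℝ) - u)^2)⁻¹ = (1 - u) ^ (-2 : ℝ) := by
      rw [← Real.rpow_natCast (1-u) 2, ← Real.rpow_neg hv.le]
      norm_num
    rw [hgn, h1A, smul_eq_mul, abs_of_pos hpos]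
    simp only [hg']
    rw [hsq, Real.inv_rpow hv.le, ← Real.rpow_neg hv.le, neg_neg,
      Real.div_rpow hu0.le hv.le, div_eq_mul_inv (u ^ (1/n-1)), ← Real.rpow_neg hv.le]
    rw [show (k-1)/n - 1 = -(1/n-1) + (-2) + k/n by ring,
      Real.rpow_add hv, Real.rpow_add hv]
    ring
  rw [setIntegral_congr_fun measurableSet_Ioo key, MeasureTheory.integral_const_mul,
    realBeta (1/n) ((k-1)/n) h1n (div_pos (by linarith) hn)]

theorem stmt_4 (n k : ℝ) (hn : 2 < n) (hk1 : 1 < k) (hkn : k < n) :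
    ∫ t in Set.Ioi (0:ℝ), (1 + t ^ n) ^ (-(k / n)) =
      (Real.cos (Real.pi / n) +
        Real.sin (Real.pi / n) * Real.cot ((k - 1) * Real.pi / n)) *
        ∫ x in (0:ℝ)..1, (1 - x ^ n) ^ (-(k / n)) := by
  have hn0 : (0:ℝ) < n := by linarith
  have hπ := Real.pi_pos
  have hA0 : (0:ℝ) < (k-1)/n := div_pos (by linarith) hn0
  have hA1 : (k-1)/n < 1 := (div_lt_one hn0).mpr (by linarith)
  have hB0 : (0:ℝ) < k/n := div_pos (by linarith) hn0
  have hB1 : k/n < 1 := (div_lt_one hn0).mpr hkn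
  have sA : (0:ℝ) < Real.sin (Real.pi * ((k-1)/n)) :=
    Real.sin_pos_of_pos_of_lt_pi (by positivity) (by nlinarith)
  have sB : (0:ℝ) < Real.sin (Real.pi * (k/n)) :=
    Real.sin_pos_of_pos_of_lt_pi (by positivity) (by nlinarith)
  rw [subI n k hn0 hk1 hkn, subJ n k hn0 (by linarith) hkn,
    show 1/n + (k-1)/n = k/n by ring, show 1/n + (1 - k/n) = 1 - (k-1)/n by ring]
  have e1 : Real.Gamma ((k-1)/n) * Real.Gamma (1 - (k-1)/n) * Real.sin (Real.pi * ((k-1)/n))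
      = Real.pi := by
    rw [Real.Gamma_mul_Gamma_one_sub, div_mul_cancel₀ _ sA.ne']
  have e2 : Real.Gamma (k/n) * Real.Gamma (1 - k/n) * Real.sin (Real.pi * (k/n))
      = Real.pi := by
    rw [Real.Gamma_mul_Gamma_one_sub, div_mul_cancel₀ _ sB.ne']
  have hC : Real.cos (Real.pi / n) + Real.sin (Real.pi / n) * Real.cot ((k - 1) * Real.pi / n)
      = Real.sin (Real.pi * (k/n)) / Real.sin (Real.pi * ((k-1)/n)) := by
    rw [Real.cot_eq_cos_div_sin, show (k-1) * Real.pi / n = Real.pi * ((k-1)/n) by ring,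
      eq_div_iff sA.ne', add_mul, mul_assoc, div_mul_cancel₀ _ sA.ne',
      show Real.pi * (k/n) = Real.pi/n + Real.pi * ((k-1)/n) by ring, Real.sin_add]
    ring
  rw [hC]
  have gB := Real.Gamma_pos_of_pos hB0
  have gA' := Real.Gamma_pos_of_pos (by linarith : (0:ℝ) < 1 - (k-1)/n)
  set GA := Real.Gamma ((k-1)/n) with hGA
  set GB := Real.Gamma (k/n) with hGB
  set GA' := Real.Gamma (1 - (k-1)/n) with hGA'
  set GB' := Real.Gamma (1 - k/n) with hGB'
  set G1 := Real.Gamma (1/n) with hG1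
  set sa := Real.sin (Real.pi * ((k-1)/n)) with hsa
  set sb := Real.sin (Real.pi * (k/n)) with hsb
  field_simp
  linear_combination G1 * (e1 - e2)
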